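/- Let H₁,…,H_K be complex channel matrices with rank(H_k) = L_k, let N₁,…,N_K be positive integers with N_k ≤ L_k and N = ∑_k N_k, and let 𝒾 > 0. Define recursively: Σ₁ = I, 𝒜_k = H_kᴴ Σ_k⁻¹ H_k with eigenvalue decomposition 𝒜_k = U_k Λ_k U_kᴴ (eigenvalues nonincreasing), T̃_k = U_{N_k,k} Γ_k^{1/2} S_k where Γ_k is the inverse water-filling loading for eigenvalues of 𝒜_k and per-user information 𝒾_k = (N_k/N)·𝒾 (using the first N_k modes if N_k ≤ r_k, and the first r_k modes padded with zeros if N_k > r_k), S_k any N_k×N_k unitary matrix, and Σ_{k+1} = Σ_k + H_k T̃_k T̃_kᴴ H_kᴴ. Then det(I + T̃_kᴴ 𝒜_k T̃_k) = 2^{(N_k/N)·𝒾} for every k, and consequently the sum mutual information constraint holds: log₂ det(I + ∑_{k=1}^{K} H_k T̃_k T̃_kᴴ H_kᴴ) = 𝒾. -/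

import Mathlib

open Matrix BigOperators
open scoped ComplexOrder

/-- Constraint satisfaction in the main theorem: with channels
`H k` of rank `L k`, subchannel counts `0 < N k ≤ L k`, `N = ∑ k, N k`, the recursively
built precoders `T̃ k = U_{N k, k} Γ_k^(1/2) S k` (where `Σ 0 = I`,
`𝒜 k = (H k)ᴴ (Σ k)⁻¹ (H k) = U_k Λ_k U_kᴴ`, `Γ_k` the inverse water-filling loading
for per-user information `𝒾_k = (N k / N) 𝒾`, and
`Σ (k+1) = Σ k + H k T̃ k (T̃ k)ᴴ (H k)ᴴ`) satisfy
`det (I + (T̃ k)ᴴ 𝒜_k (T̃ k)) = 2 ^ ((N k / N) 𝒾)` for every `k`, and hence the sum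
mutual information constraint `log₂ det (I + ∑ k, H k T̃ k (T̃ k)ᴴ (H k)ᴴ) = 𝒾`. -/

lemma key_prod (m r : ℕ) (lam gam : ℕ → ℝ) (x : ℝ) (hm : 0 < m) (hr : 0 < r)
    (hnonneg : ∀ n < r, 0 ≤ lam n)
    (hactive : ∀ n < r,
      ((∏ i ∈ Finset.range r, lam i) / 2 ^ x) ^ ((1 : ℝ) / r) < lam n)
    (hgam : ∀ n < m, gam n =
      if m ≤ r then
        (2 ^ x / ∏ i ∈ Finset.range m, lam i) ^ ((1 : ℝ) / m) - (lam n)⁻¹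
      else if n < r then
        (2 ^ x / ∏ i ∈ Finset.range r, lam i) ^ ((1 : ℝ) / r) - (lam n)⁻¹
      else 0) :
    (∀ n < m, 0 ≤ gam n) ∧
      ∏ n ∈ Finset.range m, (1 + gam n * lam n) = 2 ^ x := by
  have hX : (0:ℝ) < 2 ^ x := Real.rpow_pos_of_pos two_pos x
  set X : ℝ := 2 ^ x with hXdef
  set b : ℝ := ((∏ i ∈ Finset.range r, lam i) / X) ^ ((1 : ℝ) / r) with hbdef
  have hb0 : 0 ≤ b := Real.rpow_nonneg (div_nonneg
    (Finset.prod_nonneg fun i hi => hnonneg i (Finset.mem_range.mp hi)) hX.le) _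
  have hlampos : ∀ n < r, 0 < lam n := fun n hn => lt_of_le_of_lt hb0 (hactive n hn)
  have hPr : (0:ℝ) < ∏ i ∈ Finset.range r, lam i :=
    Finset.prod_pos fun i hi => hlampos i (Finset.mem_range.mp hi)
  have hbpos : 0 < b := Real.rpow_pos_of_pos (div_pos hPr hX) _
  -- key rpow identity
  have hpow : ∀ y : ℝ, 0 ≤ y → ∀ s : ℕ, 0 < s → (y ^ ((1:ℝ)/s)) ^ s = y := by
    intro y hy s hs
    rw [← Real.rpow_natCast (y ^ ((1:ℝ)/s)) s, ← Real.rpow_mul hy,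
      one_div, inv_mul_cancel₀ (by exact_mod_cast hs.ne'), Real.rpow_one]
  have hbr : b ^ r = (∏ i ∈ Finset.range r, lam i) / X :=
    hpow _ (div_nonneg hPr.le hX.le) r hr
  by_cases hmr : m ≤ r
  · -- case m ≤ r
    have hPm : (0:ℝ) < ∏ i ∈ Finset.range m, lam i :=
      Finset.prod_pos fun i hi => hlampos i (lt_of_lt_of_le (Finset.mem_range.mp hi) hmr)
    set bm : ℝ := ((∏ i ∈ Finset.range m, lam i) / X) ^ ((1 : ℝ) / m) with hbmdef
    have hbmpos : 0 < bm := Real.rpow_pos_of_pos (div_pos hPm hX) _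
    have hbmm : bm ^ m = (∏ i ∈ Finset.range m, lam i) / X :=
      hpow _ (div_nonneg hPm.le hX.le) m hm
    -- b_m ≤ b
    have hble : bm ≤ b := by
      have h1 : b ^ (r - m) ≤ ∏ i ∈ Finset.Ico m r, lam i := by
        calc b ^ (r - m) = ∏ i ∈ Finset.Ico m r, b := by
              rw [Finset.prod_const, Nat.card_Ico]
          _ ≤ ∏ i ∈ Finset.Ico m r, lam i :=
              Finset.prod_le_prod (fun i _ => hb0)
                (fun i hi => (hactive i (Finset.mem_Ico.mp hi).2).le)
      have h2 : bm ^ m * b ^ (r - m) ≤ b ^ m * b ^ (r - m) := by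
        have : b ^ m * b ^ (r - m) = b ^ r := by
          rw [← pow_add]; congr 1; omega
        rw [this, hbr, ← Finset.prod_range_mul_prod_Ico lam hmr, hbmm]
        rw [div_mul_eq_mul_div, div_le_div_iff_of_pos_right hX]
        calc (∏ i ∈ Finset.range m, lam i) * b ^ (r-m)
            ≤ (∏ i ∈ Finset.range m, lam i) * ∏ i ∈ Finset.Ico m r, lam i :=
              mul_le_mul_of_nonneg_left h1 hPm.le
          _ = _ := rfl
      have h3 : bm ^ m ≤ b ^ m :=
        le_of_mul_le_mul_right h2 (pow_pos hbpos _)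
      exact (pow_le_pow_iff_left₀ hbmpos.le hb0 hm.ne').mp h3
    have hlamge : ∀ n < m, bm < lam n := fun n hn =>
      lt_of_le_of_lt hble (hactive n (lt_of_lt_of_le hn hmr))
    set c : ℝ := (X / ∏ i ∈ Finset.range m, lam i) ^ ((1:ℝ)/m) with hcdef
    have hcbm : c = bm⁻¹ := by
      rw [hcdef, hbmdef, ← Real.inv_rpow (div_nonneg hPm.le hX.le), inv_div]
    have hgam' : ∀ n < m, gam n = c - (lam n)⁻¹ := by
      intro n hn; rw [hgam n hn, if_pos hmr]
    have hgnn : ∀ n < m, 0 ≤ gam n := by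
      intro n hn
      rw [hgam' n hn, sub_nonneg, hcbm]
      exact inv_anti₀ hbmpos (hlamge n hn).le
    refine ⟨hgnn, ?_⟩
    have hterm : ∀ n ∈ Finset.range m, 1 + gam n * lam n = c * lam n := by
      intro n hn
      have hn' := Finset.mem_range.mp hn
      have hl : lam n ≠ 0 := (hlampos n (lt_of_lt_of_le hn' hmr)).ne'
      rw [hgam' n hn', sub_mul, inv_mul_cancel₀ hl]; ring
    rw [Finset.prod_congr rfl hterm, Finset.prod_mul_distrib, Finset.prod_const,
      Finset.card_range, hpow _ (div_nonneg hX.le hPm.le) m hm,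
      div_mul_cancel₀ _ hPm.ne']
  · -- case r < m
    push_neg at hmr
    set c : ℝ := (X / ∏ i ∈ Finset.range r, lam i) ^ ((1:ℝ)/r) with hcdef
    have hcb : c = b⁻¹ := by
      rw [hcdef, hbdef, ← Real.inv_rpow (div_nonneg hPr.le hX.le), inv_div]
    have hgam' : ∀ n < m, gam n = if n < r then c - (lam n)⁻¹ else 0 := by
      intro n hn; rw [hgam n hn, if_neg (by omega)]
    have hgnn : ∀ n < m, 0 ≤ gam n := by
      intro n hn
      rw [hgam' n hn]
      split
      · rename_i hnr
        rw [sub_nonneg, hcb]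
        exact inv_anti₀ hbpos (hactive n hnr).le
      · exact le_refl 0
    refine ⟨hgnn, ?_⟩
    rw [← Finset.prod_range_mul_prod_Ico _ hmr.le]
    have h2 : ∏ n ∈ Finset.Ico r m, (1 + gam n * lam n) = 1 := by
      apply Finset.prod_eq_one
      intro n hn
      have := Finset.mem_Ico.mp hn
      rw [hgam' n this.2, if_neg (by omega)]; ring
    have hterm : ∀ n ∈ Finset.range r, 1 + gam n * lam n = c * lam n := by
      intro n hn
      have hn' := Finset.mem_range.mp hn
      rw [hgam' n (hn'.trans hmr), if_pos hn', sub_mul,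
        inv_mul_cancel₀ (hlampos n hn').ne']; ring
    rw [h2, mul_one, Finset.prod_congr rfl hterm, Finset.prod_mul_distrib,
      Finset.prod_const, Finset.card_range,
      hpow _ (div_nonneg hX.le hPr.le) r hr, div_mul_cancel₀ _ hPr.ne']


lemma subrow_mul {l m n : Type*} [Fintype m] (B : Matrix m m ℂ) (C : Matrix m n ℂ)
    (g : l → m) : B.submatrix g id * C = (B * C).submatrix g id := by
  ext i j; simp [Matrix.mul_apply]

lemma submatrix_mul_submatrix {l m : Type*} [Fintype m] (B C : Matrix m m ℂ)
    (g g' : l → m) : B.submatrix g id * C.submatrix id g' = (B * C).submatrix g g' := by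
  ext i j; simp [Matrix.mul_apply]

lemma det_one_add_T {M Nn : ℕ} (hMN : Nn ≤ M)
    (U : Matrix (Fin M) (Fin M) ℂ) (hU : U ∈ Matrix.unitaryGroup (Fin M) ℂ)
    (lam gam : ℕ → ℝ) (hg : ∀ n < Nn, 0 ≤ gam n)
    (S : Matrix (Fin Nn) (Fin Nn) ℂ) (hS : S ∈ Matrix.unitaryGroup (Fin Nn) ℂ)
    (T : Matrix (Fin M) (Fin Nn) ℂ)
    (hT : T = U.submatrix id (Fin.castLE hMN) *
      Matrix.diagonal (fun n : Fin Nn => ((Real.sqrt (gam n) : ℝ) : ℂ)) * S) :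
    (1 + Tᴴ * (U * Matrix.diagonal (fun i : Fin M => ((lam i : ℝ) : ℂ)) * Uᴴ) * T).det
      = ((∏ n ∈ Finset.range Nn, (1 + gam n * lam n) : ℝ) : ℂ) := by
  have hU' : Uᴴ * U = 1 := by
    have := (Matrix.mem_unitaryGroup_iff').mp hU
    rwa [Matrix.star_eq_conjTranspose] at this
  have hS1 : Sᴴ * S = 1 := by
    have := (Matrix.mem_unitaryGroup_iff').mp hS
    rwa [Matrix.star_eq_conjTranspose] at this
  set g : Fin Nn → Fin M := Fin.castLE hMN with hgdef
  have hginj : Function.Injective g := fun a b h =>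
    Fin.ext (by simpa [hgdef] using congrArg Fin.val h)
  set D : Matrix (Fin Nn) (Fin Nn) ℂ :=
    Matrix.diagonal (fun n : Fin Nn => ((Real.sqrt (gam n) : ℝ) : ℂ)) with hD
  set Λ : Matrix (Fin M) (Fin M) ℂ :=
    Matrix.diagonal (fun i : Fin M => ((lam i : ℝ) : ℂ)) with hΛ
  have hDH : Dᴴ = D := by
    rw [hD, Matrix.diagonal_conjTranspose]
    exact congrArg _ (funext fun n => Complex.conj_ofReal _)
  have hsub : (U.submatrix id g)ᴴ * (U * Λ * Uᴴ) * U.submatrix id g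
      = Matrix.diagonal (fun n : Fin Nn => ((lam (g n) : ℝ) : ℂ)) := by
    rw [Matrix.conjTranspose_submatrix, subrow_mul, submatrix_mul_submatrix]
    have : Uᴴ * (U * Λ * Uᴴ) * U = Λ := by
      rw [← Matrix.mul_assoc, ← Matrix.mul_assoc, hU', Matrix.one_mul,
        Matrix.mul_assoc, hU', Matrix.mul_one]
    rw [this, hΛ, Matrix.submatrix_diagonal _ g hginj]
    rfl
  have key : Tᴴ * (U * Λ * Uᴴ) * T
      = Sᴴ * Matrix.diagonal (fun n : Fin Nn => ((gam (n : ℕ) * lam (n : ℕ) : ℝ) : ℂ)) * S := by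
    have e1 : Tᴴ * (U * Λ * Uᴴ) * T
        = Sᴴ * (D * ((U.submatrix id g)ᴴ * (U * Λ * Uᴴ) * U.submatrix id g) * D) * S := by
      rw [hT, Matrix.conjTranspose_mul, Matrix.conjTranspose_mul, hDH]
      simp only [Matrix.mul_assoc]
    have hdd : Matrix.diagonal (fun i : Fin Nn =>
        ((Real.sqrt (gam i) : ℝ) : ℂ) * ((lam ((g i : Fin M) : ℕ) : ℝ) : ℂ)
          * ((Real.sqrt (gam i) : ℝ) : ℂ))
        = Matrix.diagonal (fun n : Fin Nn => ((gam (n:ℕ) * lam (n:ℕ) : ℝ) : ℂ)) := by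
      refine congrArg _ (funext fun n => ?_)
      have h0 : (0:ℝ) ≤ gam n := hg n n.isLt
      have hgn : ((g n : Fin M) : ℕ) = (n : ℕ) := rfl
      rw [hgn, ← Complex.ofReal_mul, ← Complex.ofReal_mul]
      exact congrArg _ (by rw [mul_comm, ← mul_assoc, Real.mul_self_sqrt h0])
    rw [e1, hsub, hD, Matrix.diagonal_mul_diagonal, Matrix.diagonal_mul_diagonal, hdd]
  rw [key]
  have e2 : 1 + Sᴴ * Matrix.diagonal (fun n : Fin Nn => ((gam (n:ℕ) * lam (n:ℕ) : ℝ) : ℂ)) * S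
      = Sᴴ * (1 + Matrix.diagonal (fun n : Fin Nn => ((gam (n:ℕ) * lam (n:ℕ) : ℝ) : ℂ))) * S := by
    rw [Matrix.mul_add, Matrix.mul_one, Matrix.add_mul, hS1, Matrix.mul_assoc]
  rw [e2, Matrix.det_mul, Matrix.det_mul]
  have hdS : Sᴴ.det * S.det = 1 := by rw [← Matrix.det_mul, hS1, Matrix.det_one]
  have : Sᴴ.det * (1 + Matrix.diagonal fun n : Fin Nn =>
      ((gam (n:ℕ) * lam (n:ℕ) : ℝ) : ℂ)).det * S.det
      = (1 + Matrix.diagonal fun n : Fin Nn =>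
      ((gam (n:ℕ) * lam (n:ℕ) : ℝ) : ℂ)).det * (Sᴴ.det * S.det) := by ring
  rw [this, hdS, mul_one, ← Matrix.diagonal_one, Matrix.diagonal_add,
    Matrix.det_diagonal]
  rw [← Fin.prod_univ_eq_prod_range (fun i : ℕ => (1 + gam i * lam i : ℝ)) Nn,
    Complex.ofReal_prod]
  push_cast
  rfl

lemma sum_ite_succ_aux {K : ℕ} {β : Type*} [AddCommMonoid β] (f : Fin K → β) (m : ℕ)
    (hm : m < K) :
    (∑ j : Fin K, if (j : ℕ) < m + 1 then f j else 0)
      = (∑ j : Fin K, if (j : ℕ) < m then f j else 0) + f ⟨m, hm⟩ := by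
  have h : ∀ j : Fin K, (if (j : ℕ) < m + 1 then f j else 0)
      = (if (j : ℕ) < m then f j else 0) + (if j = ⟨m, hm⟩ then f j else 0) := by
    intro j
    by_cases h1 : (j : ℕ) < m
    · rw [if_pos (by omega), if_pos h1, if_neg (by simp [Fin.ext_iff]; omega), add_zero]
    · by_cases h2 : (j : ℕ) = m
      · rw [if_pos (by omega), if_neg h1, if_pos (by simp [Fin.ext_iff, h2]), zero_add]
      · rw [if_neg (by omega), if_neg h1, if_neg (by simp [Fin.ext_iff]; omega), add_zero]
  rw [Finset.sum_congr rfl (fun j _ => h j), Finset.sum_add_distrib,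
    Finset.sum_ite_eq' Finset.univ (⟨m, hm⟩ : Fin K) f, if_pos (Finset.mem_univ _)]

theorem multiuser_transceiver_meets_sum_information {P K : ℕ}
    (Mdim L N : Fin K → ℕ)
    (H : ∀ k : Fin K, Matrix (Fin P) (Fin (Mdim k)) ℂ)
    (hrank : ∀ k, (H k).rank = L k)
    (hNpos' : ∀ k, 0 < N k) (hNL : ∀ k, N k ≤ L k) (hNM : ∀ k, N k ≤ Mdim k)
    (Ntot : ℕ) (hNtot : Ntot = ∑ k, N k) (hNpos : 0 < Ntot)
    (Info : ℝ) (hI : 0 < Info)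
    (Sig : Fin (K + 1) → Matrix (Fin P) (Fin P) ℂ)
    (hSig0 : Sig 0 = 1)
    (A : ∀ k : Fin K, Matrix (Fin (Mdim k)) (Fin (Mdim k)) ℂ)
    (hA : ∀ k, A k = (H k)ᴴ * (Sig k.castSucc)⁻¹ * H k)
    (U : ∀ k : Fin K, Matrix (Fin (Mdim k)) (Fin (Mdim k)) ℂ)
    (hU : ∀ k, U k ∈ Matrix.unitaryGroup (Fin (Mdim k)) ℂ)
    (lam : Fin K → ℕ → ℝ)
    (hdecomp : ∀ k, A k =
      U k * Matrix.diagonal (fun i : Fin (Mdim k) => ((lam k i : ℝ) : ℂ)) * (U k)ᴴ)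
    (hmono : ∀ k, ∀ i j : ℕ, i ≤ j → j < Mdim k → lam k j ≤ lam k i)
    (hnonneg : ∀ k, ∀ n < Mdim k, 0 ≤ lam k n)
    (r : Fin K → ℕ)
    (hrpos : ∀ k, 0 < r k) (hrM : ∀ k, r k ≤ Mdim k)
    (hactive : ∀ k, ∀ n < r k,
      ((∏ i ∈ Finset.range (r k), lam k i) / 2 ^ ((N k : ℝ) / Ntot * Info))
          ^ ((1 : ℝ) / (r k)) < lam k n)
    (hmax : ∀ k, ∀ r', r k < r' → r' ≤ Mdim k →
      ¬ (∀ n < r',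
        ((∏ i ∈ Finset.range r', lam k i) / 2 ^ ((N k : ℝ) / Ntot * Info))
            ^ ((1 : ℝ) / r') < lam k n))
    (gam : Fin K → ℕ → ℝ)
    (hgam : ∀ k, ∀ n < N k, gam k n =
      if N k ≤ r k then
        (2 ^ ((N k : ℝ) / Ntot * Info) / ∏ i ∈ Finset.range (N k), lam k i)
            ^ ((1 : ℝ) / (N k)) - (lam k n)⁻¹
      else if n < r k then
        (2 ^ ((N k : ℝ) / Ntot * Info) / ∏ i ∈ Finset.range (r k), lam k i)
            ^ ((1 : ℝ) / (r k)) - (lam k n)⁻¹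
      else 0)
    (S : ∀ k : Fin K, Matrix (Fin (N k)) (Fin (N k)) ℂ)
    (hS : ∀ k, S k ∈ Matrix.unitaryGroup (Fin (N k)) ℂ)
    (T : ∀ k : Fin K, Matrix (Fin (Mdim k)) (Fin (N k)) ℂ)
    (hT : ∀ k, T k = (U k).submatrix id (Fin.castLE (hNM k)) *
      Matrix.diagonal (fun n : Fin (N k) => ((Real.sqrt (gam k n) : ℝ) : ℂ)) * S k)
    (hSigS : ∀ k : Fin K,
      Sig k.succ = Sig k.castSucc + H k * T k * (T k)ᴴ * (H k)ᴴ) :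
    (∀ k, (1 + (T k)ᴴ * A k * T k).det =
        (((2 : ℝ) ^ ((N k : ℝ) / Ntot * Info) : ℝ) : ℂ)) ∧
    Real.logb 2 ((1 + ∑ k, H k * T k * (T k)ᴴ * (H k)ᴴ).det).re = Info := by
  have hkey : ∀ k : Fin K, (∀ n < N k, 0 ≤ gam k n) ∧
      ∏ n ∈ Finset.range (N k), (1 + gam k n * lam k n)
        = 2 ^ ((N k : ℝ) / Ntot * Info) :=
    fun k => key_prod (N k) (r k) (lam k) (gam k) _ (hNpos' k) (hrpos k)
      (fun n hn => hnonneg k n (lt_of_lt_of_le hn (hrM k))) (hactive k) (hgam k)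
  have hdetk : ∀ k : Fin K, (1 + (T k)ᴴ * A k * T k).det
      = (((2 : ℝ) ^ ((N k : ℝ) / Ntot * Info) : ℝ) : ℂ) := by
    intro k
    rw [hdecomp k, det_one_add_T (hNM k) (U k) (hU k) (lam k) (gam k) (hkey k).1
      (S k) (hS k) (T k) (hT k), (hkey k).2]
  refine ⟨hdetk, ?_⟩
  -- determinant recursion step
  have hstep : ∀ k : Fin K, (Sig k.castSucc).det ≠ 0 →
      (Sig k.succ).det = (Sig k.castSucc).det * (1 + (T k)ᴴ * A k * T k).det := by
    intro k hdne
    have hinv : Sig k.castSucc * (Sig k.castSucc)⁻¹ = 1 :=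
      Matrix.mul_nonsing_inv _ (isUnit_iff_ne_zero.mpr hdne)
    have hX : H k * T k * (T k)ᴴ * (H k)ᴴ = (H k * T k) * (H k * T k)ᴴ := by
      rw [Matrix.conjTranspose_mul]; simp only [Matrix.mul_assoc]
    have e : Sig k.succ = Sig k.castSucc *
        (1 + (Sig k.castSucc)⁻¹ * (H k * T k) * (H k * T k)ᴴ) := by
      rw [hSigS k, Matrix.mul_add, Matrix.mul_one, hX, ← Matrix.mul_assoc,
        ← Matrix.mul_assoc, hinv, Matrix.one_mul]
    rw [e, Matrix.det_mul, Matrix.det_one_add_mul_comm]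
    congr 2
    rw [hA k, Matrix.conjTranspose_mul]
    simp only [Matrix.mul_assoc]
  -- the main induction
  have hind : ∀ m : ℕ, ∀ hm : m < K + 1,
      (Sig ⟨m, hm⟩).det
        = (((2 : ℝ) ^ (∑ j : Fin K, if (j : ℕ) < m then (N j : ℝ) / Ntot * Info else 0)
            : ℝ) : ℂ)
      ∧ Sig ⟨m, hm⟩
        = 1 + ∑ j : Fin K, if (j : ℕ) < m then H j * T j * (T j)ᴴ * (H j)ᴴ else 0 := by
    intro m
    induction m with
    | zero =>
      intro hm
      have h0 : (⟨0, hm⟩ : Fin (K + 1)) = 0 := rfl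
      constructor
      · simp [h0, hSig0]
      · simp [h0, hSig0]
    | succ m ih =>
      intro hm
      have hmK : m < K := by omega
      obtain ⟨ih1, ih2⟩ := ih (by omega)
      set k : Fin K := ⟨m, hmK⟩ with hk
      have hcs : k.castSucc = (⟨m, by omega⟩ : Fin (K + 1)) := rfl
      have hsc : k.succ = (⟨m + 1, hm⟩ : Fin (K + 1)) := rfl
      have hne : (Sig k.castSucc).det ≠ 0 := by
        rw [hcs, ih1]
        exact Complex.ofReal_ne_zero.mpr (Real.rpow_pos_of_pos two_pos _).ne'
      constructor
      · rw [← hsc, hstep k hne, hcs, ih1, hdetk k,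
          sum_ite_succ_aux (fun j => (N j : ℝ) / Ntot * Info) m hmK,
          Real.rpow_add two_pos, Complex.ofReal_mul]
      · rw [← hsc, hSigS k, hcs, ih2,
          sum_ite_succ_aux (fun j => H j * T j * (T j)ᴴ * (H j)ᴴ) m hmK, add_assoc]
  obtain ⟨hd, hs⟩ := hind K (by omega)
  have hfull : (∑ j : Fin K, if (j : ℕ) < K then H j * T j * (T j)ᴴ * (H j)ᴴ else 0)
      = ∑ j : Fin K, H j * T j * (T j)ᴴ * (H j)ᴴ :=
    Finset.sum_congr rfl fun j _ => if_pos j.isLt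
  have hE : (∑ j : Fin K, if (j : ℕ) < K then (N j : ℝ) / Ntot * Info else 0) = Info := by
    rw [Finset.sum_congr rfl fun j _ => if_pos j.isLt]
    have : ∀ j : Fin K, (N j : ℝ) / Ntot * Info = (N j : ℝ) * (Info / Ntot) := by
      intro j; ring
    rw [Finset.sum_congr rfl fun j _ => this j, ← Finset.sum_mul]
    have hNc : (∑ j : Fin K, (N j : ℝ)) = (Ntot : ℝ) := by
      rw [hNtot]; push_cast; ring
    rw [hNc, div_eq_mul_inv, ← mul_assoc, mul_comm (Ntot:ℝ) Info, mul_assoc,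
      mul_inv_cancel₀ (by exact_mod_cast hNpos.ne'), mul_one]
  rw [← hfull, ← hs, hd, hE, Complex.ofReal_re]
  exact Real.logb_rpow (by norm_num) (by norm_num)
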